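/- Let (R, m) be a Noetherian local ring, ν a rank-1 valuation centered on R with support P_∞, R̂ the m-adic completion, and H = ⋂_β P_β R̂ the implicit prime ideal. For f ∈ R̂ the following are equivalent: (a) f ∈ H; (b) there exists a Cauchy sequence (f_n) in R converging to f in R̂ with ν(f_n) → ∞ (i.e., for every β in the value semigroup, ν(f_n) ≥ β for all large n); (c) every Cauchy sequence (f_n) in R converging to f satisfies ν(f_n) → ∞. -/

import Mathlib

open AdicCompletion

lemma aux_density {R : Type*} [CommRing R] [IsNoetherianRing R] (I : Ideal R) (k : ℕ)
    (F : AdicCompletion I R) :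
    ∃ g : R, F - algebraMap R (AdicCompletion I R) g ∈
      Ideal.map (algebraMap R (AdicCompletion I R)) (I ^ k) := by
  obtain ⟨g, hg⟩ := Submodule.Quotient.mk_surjective _ (F.val k)
  refine ⟨g, ?_⟩
  set G := F - algebraMap R (AdicCompletion I R) g with hGdef
  have hG0 : G.val k = 0 := by
    rw [hGdef, AdicCompletion.val_sub, Pi.sub_apply, show (algebraMap R (AdicCompletion I R) g).val k
      = Submodule.Quotient.mk g from rfl, hg, sub_self]
  -- the quotient map
  set J : Submodule R R := (I ^ k • ⊤ : Submodule R R) with hJdef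
  have hJI : J = (I ^ k : Ideal R) := by ext x; simp [hJdef]
  have hmap0 : AdicCompletion.map I J.mkQ G = 0 := by
    refine AdicCompletion.ext fun n => ?_
    rw [AdicCompletion.map_val_apply, AdicCompletion.val_zero]
    rcases le_total n k with hnk | hkn
    · have h1 := transitionMap_comp_eval_apply I R hnk G
      rw [hG0, _root_.map_zero] at h1
      rw [← h1]
      exact _root_.map_zero _
    · obtain ⟨y, hy⟩ := Submodule.Quotient.mk_surjective _ (G.val n)
      have hyJ : y ∈ J := by
        have h1 := transitionMap_comp_eval_apply I R hkn G
        rw [hG0, ← hy] at h1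
        change Submodule.Quotient.mk (p := (I ^ k • ⊤ : Submodule R R)) y = 0 at h1
        rwa [Submodule.Quotient.mk_eq_zero] at h1
      rw [← hy, LinearMap.reduceModIdeal_apply]
      rw [show J.mkQ y = 0 from (Submodule.Quotient.mk_eq_zero J).mpr hyJ,
        Submodule.Quotient.mk_zero, Pi.zero_apply]
  have hexact := AdicCompletion.map_exact (I := I) (Submodule.injective_subtype J)
    (LinearMap.exact_subtype_mkQ J) (Submodule.mkQ_surjective J)
  obtain ⟨X, hX⟩ := (hexact G).mp hmap0
  haveI : Module.Finite R ↥J := Module.Finite.iff_fg.mpr (IsNoetherian.noetherian J)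
  obtain ⟨t, ht⟩ := AdicCompletion.ofTensorProduct_surjective_of_finite I ↥J X
  rw [← hX, ← ht]
  clear hX ht
  induction t using TensorProduct.induction_on with
  | zero => rw [_root_.map_zero, _root_.map_zero]; exact Ideal.zero_mem _
  | tmul c x =>
      rw [AdicCompletion.ofTensorProduct_tmul, LinearMap.map_smul]
      have hof : AdicCompletion.map I J.subtype (AdicCompletion.of I ↥J x)
          = algebraMap R (AdicCompletion I R) (x : R) := by
        refine AdicCompletion.ext fun n => ?_
        rw [AdicCompletion.map_val_apply, AdicCompletion.of_apply, Submodule.mkQ_apply,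
          LinearMap.reduceModIdeal_apply]
        rfl
      rw [hof]
      exact Ideal.mul_mem_left _ c (Ideal.mem_map_of_mem _ (hJI ▸ x.2))
  | add a b ha hb => rw [_root_.map_add, _root_.map_add]; exact Ideal.add_mem _ ha hb
open AdicCompletion IsLocalRing

lemma aux_contraction {R : Type*} [CommRing R] [IsLocalRing R] [IsNoetherianRing R]
    (J : Ideal R) (g : R)
    (h : algebraMap R (AdicCompletion (maximalIdeal R) R) g ∈
      Ideal.map (algebraMap R (AdicCompletion (maximalIdeal R) R)) J) :
    g ∈ J := by
  by_cases hJ : J = ⊤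
  · simp [hJ]
  set I := maximalIdeal R with hI
  have hcomp : ∀ k : ℕ, (AdicCompletion.evalₐ I k).toRingHom.comp
      (algebraMap R (AdicCompletion I R)) = Ideal.Quotient.mk (I ^ k) := by
    intro k
    ext x
    rw [RingHom.comp_apply]
    rw [show ((AdicCompletion.evalₐ I k).toRingHom) (algebraMap R (AdicCompletion I R) x)
      = (AdicCompletion.evalₐ I k) (algebraMap R (AdicCompletion I R) x) from rfl,
      AlgHom.commutes, Ideal.Quotient.algebraMap_eq]
  have hsup : ∀ k : ℕ, g ∈ J ⊔ I ^ k := by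
    intro k
    have h1 := Ideal.mem_map_of_mem (AdicCompletion.evalₐ I k).toRingHom h
    rw [Ideal.map_map, hcomp k] at h1
    have h2 : Ideal.Quotient.mk (I ^ k) g ∈ Ideal.map (Ideal.Quotient.mk (I ^ k)) J := by
      have := RingHom.congr_fun (hcomp k) g
      rw [RingHom.comp_apply] at this
      rwa [← this]
    rwa [Ideal.mem_quotient_iff_mem_sup] at h2
  haveI hnt : Nontrivial (R ⧸ J) := Ideal.Quotient.nontrivial_iff.mpr hJ
  haveI hloc : IsLocalRing (R ⧸ J) :=
    IsLocalRing.of_surjective' (Ideal.Quotient.mk J) Ideal.Quotient.mk_surjective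
  have hIbar : Ideal.map (Ideal.Quotient.mk J) I ≠ ⊤ := by
    intro htop
    have h1 : Ideal.Quotient.mk J 1 ∈ Ideal.map (Ideal.Quotient.mk J) I := by
      rw [htop]; trivial
    rw [Ideal.mem_quotient_iff_mem_sup, sup_eq_left.mpr (IsLocalRing.le_maximalIdeal hJ)] at h1
    exact (IsLocalRing.maximalIdeal.isMaximal R).ne_top (Ideal.eq_top_iff_one _ |>.mpr h1)
  have hbot := Ideal.iInf_pow_eq_bot_of_isLocalRing (Ideal.map (Ideal.Quotient.mk J) I) hIbar
  have hmem : Ideal.Quotient.mk J g ∈ (⨅ k : ℕ, (Ideal.map (Ideal.Quotient.mk J) I) ^ k) := by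
    rw [Submodule.mem_iInf]
    intro k
    rw [← Ideal.map_pow, Ideal.mem_quotient_iff_mem_sup]
    exact sup_comm J (I ^ k) ▸ hsup k
  rw [hbot, Submodule.mem_bot, Ideal.Quotient.eq_zero_iff_mem] at hmem
  exact hmem
open IsLocalRing

lemma aux_cofinal {R : Type*} [CommRing R] [IsLocalRing R] [IsNoetherianRing R]
    {Γ : Type*} [AddCommGroup Γ] [LinearOrder Γ] [IsOrderedAddMonoid Γ] [Archimedean Γ]
    (v : R → WithTop Γ)
    (hmul : ∀ a b, v (a * b) = v a + v b)
    (hnonneg : ∀ a, 0 ≤ v a)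
    (hmax : ∀ a, a ∈ maximalIdeal R ↔ 0 < v a)
    (P : Γ → Ideal R) (hP : ∀ β f, f ∈ P β ↔ (β : WithTop Γ) ≤ v f)
    (β : Γ) : ∃ k : ℕ, maximalIdeal R ^ k ≤ P β := by
  obtain ⟨S, hS⟩ := IsNoetherian.noetherian (maximalIdeal R)
  by_cases hT : ∀ a ∈ S, v a = ⊤
  · refine ⟨1, ?_⟩
    rw [pow_one, ← hS, Submodule.span_le]
    intro a ha
    rw [SetLike.mem_coe, hP, hT a ha]
    exact le_top
  · push_neg at hT
    obtain ⟨a₀, ha₀S, ha₀⟩ := hT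
    obtain ⟨c, hc⟩ : ∃ c : Γ, v a₀ = (c : WithTop Γ) :=
      ⟨(v a₀).untop ha₀, (WithTop.coe_untop _ _).symm⟩
    set W : Finset Γ := S.image (fun a => WithTop.untopD c (v a)) with hW
    have hWne : W.Nonempty := ⟨c, Finset.mem_image.mpr ⟨a₀, ha₀S, by rw [hc]; rfl⟩⟩
    set γ := W.min' hWne with hγ
    have hmem_m : ∀ a ∈ S, a ∈ maximalIdeal R := fun a ha => hS ▸ Ideal.subset_span ha
    have hγpos : 0 < γ := by
      obtain ⟨a, haS, hav⟩ := Finset.mem_image.mp (W.min'_mem hWne)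
      rcases eq_or_ne (v a) ⊤ with htop | hfin
      · have hγc : γ = c := by rw [hγ, ← hav, htop]; rfl
        rw [hγc]
        have h0 := (hmax a₀).mp (hmem_m a₀ ha₀S)
        rw [hc] at h0; exact_mod_cast h0
      · obtain ⟨e, he⟩ : ∃ e : Γ, v a = e := ⟨(v a).untop hfin, (WithTop.coe_untop _ _).symm⟩
        have hγe : γ = e := by rw [hγ, ← hav, he, WithTop.untopD_coe]
        rw [hγe]
        have h0 := (hmax a).mp (hmem_m a haS)
        rw [he] at h0; exact_mod_cast h0
    have hmle : maximalIdeal R ≤ P γ := by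
      rw [← hS, Submodule.span_le]
      intro a ha
      rw [SetLike.mem_coe, hP]
      rcases eq_or_ne (v a) ⊤ with htop | hfin
      · rw [htop]; exact le_top
      · obtain ⟨e, he⟩ : ∃ e : Γ, v a = e := ⟨(v a).untop hfin, (WithTop.coe_untop _ _).symm⟩
        rw [he]
        have hge : γ ≤ e := W.min'_le e (Finset.mem_image.mpr ⟨a, ha, by rw [he, WithTop.untopD_coe]⟩)
        exact_mod_cast hge
    have hpow : ∀ j : ℕ, maximalIdeal R ^ j ≤ P (j • γ) := by
      intro j
      induction j with
      | zero => intro x _; rw [hP, zero_nsmul]; simpa using hnonneg x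
      | succ j ih =>
          rw [pow_succ]
          refine (Ideal.mul_le).mpr fun r hr s hs => ?_
          rw [hP, hmul, succ_nsmul, WithTop.coe_add]
          exact add_le_add ((hP _ r).mp (ih hr)) ((hP _ s).mp (hmle hs))
    obtain ⟨k, hk⟩ := Archimedean.arch β hγpos
    refine ⟨k, le_trans (hpow k) fun x hx => ?_⟩
    rw [hP] at hx ⊢
    exact le_trans (by exact_mod_cast hk) hx
theorem mem_implicit_ideal_iff_cauchy
    {R : Type*} [CommRing R] [IsLocalRing R] [IsNoetherianRing R]
    {Γ : Type*} [AddCommGroup Γ] [LinearOrder Γ] [IsOrderedAddMonoid Γ] [Archimedean Γ]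
    (v : R → WithTop Γ)
    (hv1 : v 1 = 0) (hv0 : v 0 = ⊤)
    (hmul : ∀ a b, v (a * b) = v a + v b)
    (hadd : ∀ a b, min (v a) (v b) ≤ v (a + b))
    (hnonneg : ∀ a, 0 ≤ v a)
    (hmax : ∀ a, a ∈ IsLocalRing.maximalIdeal R ↔ 0 < v a)
    (Pinf : Ideal R) (hPinf : ∀ a, a ∈ Pinf ↔ v a = ⊤)
    (hminimal : Pinf ∈ minimalPrimes R)
    (P : Γ → Ideal R) (hP : ∀ β f, f ∈ P β ↔ (β : WithTop Γ) ≤ v f)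
    (φ : R →+* AdicCompletion (IsLocalRing.maximalIdeal R) R)
    (hφ : φ = algebraMap R (AdicCompletion (IsLocalRing.maximalIdeal R) R))
    (H : Ideal (AdicCompletion (IsLocalRing.maximalIdeal R) R))
    (hH : H = ⨅ β ∈ {β : Γ | ∃ x : R, x ∉ Pinf ∧ v x = (β : WithTop Γ)},
      Ideal.map φ (P β))
    (F : AdicCompletion (IsLocalRing.maximalIdeal R) R) :
    (F ∈ H ↔ ∃ f : ℕ → R,
        (∀ k : ℕ, ∃ N : ℕ, ∀ n ≥ N,
          F - φ (f n) ∈ Ideal.map φ ((IsLocalRing.maximalIdeal R) ^ k)) ∧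
        (∀ β : Γ, (∃ x : R, x ∉ Pinf ∧ v x = (β : WithTop Γ)) →
          ∃ N : ℕ, ∀ n ≥ N, (β : WithTop Γ) ≤ v (f n))) ∧
    (F ∈ H ↔ ∀ f : ℕ → R,
        (∀ k : ℕ, ∃ N : ℕ, ∀ n ≥ N,
          F - φ (f n) ∈ Ideal.map φ ((IsLocalRing.maximalIdeal R) ^ k)) →
        (∀ β : Γ, (∃ x : R, x ∉ Pinf ∧ v x = (β : WithTop Γ)) →
          ∃ N : ℕ, ∀ n ≥ N, (β : WithTop Γ) ≤ v (f n))) := by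
  subst hφ hH
  set φ := algebraMap R (AdicCompletion (IsLocalRing.maximalIdeal R) R) with hφ'
  have cof : ∀ β : Γ, ∃ k : ℕ, (IsLocalRing.maximalIdeal R) ^ k ≤ P β :=
    aux_cofinal v hmul hnonneg hmax P hP
  have hmemH : ∀ G : AdicCompletion (IsLocalRing.maximalIdeal R) R,
      (G ∈ ⨅ β ∈ {β : Γ | ∃ x : R, x ∉ Pinf ∧ v x = (β : WithTop Γ)}, Ideal.map φ (P β)) ↔
      ∀ β : Γ, (∃ x : R, x ∉ Pinf ∧ v x = (β : WithTop Γ)) → G ∈ Ideal.map φ (P β) := by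
    intro G
    simp only [Ideal.mem_iInf, Set.mem_setOf_eq]
  have aIMPc : (F ∈ ⨅ β ∈ {β : Γ | ∃ x : R, x ∉ Pinf ∧ v x = (β : WithTop Γ)},
        Ideal.map φ (P β)) →
      ∀ f : ℕ → R, (∀ k : ℕ, ∃ N : ℕ, ∀ n ≥ N,
          F - φ (f n) ∈ Ideal.map φ ((IsLocalRing.maximalIdeal R) ^ k)) →
      (∀ β : Γ, (∃ x : R, x ∉ Pinf ∧ v x = (β : WithTop Γ)) →
          ∃ N : ℕ, ∀ n ≥ N, (β : WithTop Γ) ≤ v (f n)) := by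
    intro hF f hconv β hβ
    obtain ⟨k, hk⟩ := cof β
    obtain ⟨N, hN⟩ := hconv k
    refine ⟨N, fun n hn => ?_⟩
    have h1 : φ (f n) ∈ Ideal.map φ (P β) := by
      have h2 : F - φ (f n) ∈ Ideal.map φ (P β) := Ideal.map_mono hk (hN n hn)
      have h3 : F ∈ Ideal.map φ (P β) := (hmemH F).mp hF β hβ
      have h4 := Ideal.sub_mem _ h3 h2
      simpa using h4
    exact (hP β (f n)).mp (aux_contraction (P β) (f n) h1)
  have bIMPa : ∀ f : ℕ → R,
      (∀ k : ℕ, ∃ N : ℕ, ∀ n ≥ N,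
          F - φ (f n) ∈ Ideal.map φ ((IsLocalRing.maximalIdeal R) ^ k)) →
      (∀ β : Γ, (∃ x : R, x ∉ Pinf ∧ v x = (β : WithTop Γ)) →
          ∃ N : ℕ, ∀ n ≥ N, (β : WithTop Γ) ≤ v (f n)) →
      F ∈ ⨅ β ∈ {β : Γ | ∃ x : R, x ∉ Pinf ∧ v x = (β : WithTop Γ)}, Ideal.map φ (P β) := by
    intro f hconv htends
    refine (hmemH F).mpr fun β hβ => ?_
    obtain ⟨k, hk⟩ := cof β
    obtain ⟨N1, hN1⟩ := hconv k
    obtain ⟨N2, hN2⟩ := htends β hβ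
    have h1 : F - φ (f (max N1 N2)) ∈ Ideal.map φ (P β) :=
      Ideal.map_mono hk (hN1 _ (le_max_left _ _))
    have h2 : φ (f (max N1 N2)) ∈ Ideal.map φ (P β) :=
      Ideal.mem_map_of_mem φ ((hP β _).mpr (hN2 _ (le_max_right _ _)))
    have h3 := Ideal.add_mem _ h1 h2
    simpa using h3
  have dens : ∃ f : ℕ → R, ∀ k : ℕ, ∃ N : ℕ, ∀ n ≥ N,
      F - φ (f n) ∈ Ideal.map φ ((IsLocalRing.maximalIdeal R) ^ k) := by
    choose f hf using fun k => aux_density (IsLocalRing.maximalIdeal R) k F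
    exact ⟨f, fun k => ⟨k, fun n hn =>
      Ideal.map_mono (Ideal.pow_le_pow_right hn) (hf n)⟩⟩
  constructor
  · constructor
    · intro hF
      obtain ⟨f, hf⟩ := dens
      exact ⟨f, hf, aIMPc hF f hf⟩
    · rintro ⟨f, hconv, htends⟩
      exact bIMPa f hconv htends
  · constructor
    · exact aIMPc
    · intro hall
      obtain ⟨f, hf⟩ := dens
      exact bIMPa f hf (hall f hf)
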